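/- Let T be a tree with at least two vertices, τ ∈ V(T) a terminal vertex with unique adjacent vertex α, and T_τ the tree obtained by deleting τ and the edge {τ,α}. Then there is a canonical homeomorphism L_T ≅ (L_{T_τ} × ℝ) ⊔_{L_{T_τ}(α) × {0}} (L_{T_τ}(α) × ℝ_{≤0}), i.e., L_T is the pushout gluing L_{T_τ}(α) × ℝ_{≤0} to L_{T_τ} × ℝ along L_{T_τ}(α) × {0}. -/

import Mathlib

/-- The basic gluing relation for the arboreal singularity of a graph `G`. -/
def baseRel {V : Type*} (G : SimpleGraph V) :
    (Σ _ : V, V → ℝ) → (Σ _ : V, V → ℝ) → Prop := fun a b =>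
  (a.1 = b.1 ∧ ∀ γ, γ ≠ a.1 → a.2 γ = b.2 γ) ∨
  (G.Adj a.1 b.1 ∧ a.2 b.1 = b.2 a.1 ∧ 0 ≤ a.2 b.1 ∧
    ∀ γ, γ ≠ a.1 → γ ≠ b.1 → a.2 γ = b.2 γ)

namespace Stmt7Aux

variable {V : Type*} [DecidableEq V]

/-- The sum type underlying the pushout. -/
abbrev SumT (G : SimpleGraph V) (τ α : V) (hα : α ≠ τ) : Type _ :=
  (Quot (baseRel (G.induce {v | v ≠ τ})) × ℝ) ⊕
    (({w : {v : V // v ≠ τ} // w ≠ ⟨α, hα⟩} → ℝ) × {t : ℝ // t ≤ 0})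

/-- The pushout gluing relation. -/
def pushRel (G : SimpleGraph V) (τ α : V) (hα : α ≠ τ) :
    SumT G τ α hα → SumT G τ α hα → Prop := fun a b =>
  ∃ f : {w : {v : V // v ≠ τ} // w ≠ ⟨α, hα⟩} → ℝ,
    a = Sum.inr (f, ⟨0, le_refl 0⟩) ∧
      b = Sum.inl (Quot.mk _ ⟨(⟨α, hα⟩ : {v : V // v ≠ τ}),
        fun v => if h : v = (⟨α, hα⟩ : {v : V // v ≠ τ}) then 0
          else f ⟨v, h⟩⟩, (0 : ℝ))

/-- The forward map. -/
noncomputable def fwd (G : SimpleGraph V) (τ α : V) (hα : α ≠ τ) (p : Σ _ : V, V → ℝ) :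
    Quot (pushRel G τ α hα) :=
  if hβ : p.1 = τ then
    if 0 ≤ p.2 α then
      Quot.mk _ (Sum.inl (Quot.mk _ ⟨(⟨α, hα⟩ : {v : V // v ≠ τ}),
        fun v => if v = (⟨α, hα⟩ : {v : V // v ≠ τ}) then 0 else p.2 v.1⟩, p.2 α))
    else
      Quot.mk _ (Sum.inr (fun w => p.2 w.1.1, ⟨min (p.2 α) 0, min_le_right _ _⟩))
  else
    Quot.mk _ (Sum.inl (Quot.mk _ ⟨(⟨p.1, hβ⟩ : {v : V // v ≠ τ}),
      fun v => p.2 v.1⟩, p.2 τ))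

lemma inl_congr (G : SimpleGraph V) (τ α : V) (hα : α ≠ τ)
    {s₁ s₂ : Σ _ : {v : V // v ≠ τ}, {v : V // v ≠ τ} → ℝ} {t₁ t₂ : ℝ}
    (hs : baseRel (G.induce {v | v ≠ τ}) s₁ s₂ ∨ s₁ = s₂) (ht : t₁ = t₂) :
    Quot.mk (pushRel G τ α hα) (Sum.inl (Quot.mk _ s₁, t₁)) =
      Quot.mk (pushRel G τ α hα) (Sum.inl (Quot.mk _ s₂, t₂)) := by
  subst ht
  rcases hs with h | h
  · rw [Quot.sound h]
  · rw [h]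

lemma inr_congr (G : SimpleGraph V) (τ α : V) (hα : α ≠ τ)
    {f₁ f₂ : {w : {v : V // v ≠ τ} // w ≠ ⟨α, hα⟩} → ℝ} {t₁ t₂ : {t : ℝ // t ≤ 0}}
    (hf : f₁ = f₂) (ht : t₁.1 = t₂.1) :
    Quot.mk (pushRel G τ α hα) (Sum.inr (f₁, t₁)) =
      Quot.mk (pushRel G τ α hα) (Sum.inr (f₂, t₂)) := by
  subst hf
  rw [Subtype.ext ht]

theorem fwd_sound (G : SimpleGraph V) (τ α : V) (hα : α ≠ τ) (hadj : G.Adj τ α)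
    (hterm : ∀ β, G.Adj τ β → β = α) :
    ∀ a b, baseRel G a b → fwd G τ α hα a = fwd G τ α hα b := by
  rintro ⟨β, x⟩ ⟨δ, y⟩ (⟨h1, h2⟩ | ⟨hAdj, hxy, hpos, hoth⟩)
  · dsimp only at h1 h2
    subst h1
    unfold fwd
    dsimp only
    by_cases hβ : β = τ
    · subst hβ
      have hxα : x α = y α := h2 α hα
      rw [dif_pos rfl, dif_pos rfl]
      by_cases h0 : 0 ≤ y α
      · rw [if_pos (by rw [hxα]; exact h0), if_pos h0]
        refine inl_congr G _ _ hα (Or.inr ?_) hxα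
        refine congrArg (Sigma.mk _) (funext fun v => ?_)
        by_cases hv : v = (⟨α, hα⟩ : {v : V // v ≠ β})
        · simp [hv]
        · simp only [if_neg hv]
          exact h2 v.1 v.2
      · rw [if_neg (by rw [hxα]; exact h0), if_neg h0]
        refine inr_congr G _ _ hα (funext fun w => h2 w.1.1 w.1.2) ?_
        dsimp only
        rw [hxα]
    · rw [dif_neg hβ, dif_neg hβ]
      apply inl_congr G _ _ hα (Or.inl _) (h2 τ (fun h => hβ h.symm))
      left
      exact ⟨rfl, fun γ hγ => h2 γ.1 (fun h => hγ (Subtype.ext h))⟩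
  · dsimp only at hAdj hxy hpos hoth
    unfold fwd
    dsimp only
    by_cases hβ : β = τ
    · subst hβ
      have hδ : δ = α := hterm δ hAdj
      subst hδ
      rw [dif_pos rfl, if_pos hpos, dif_neg hα]
      apply inl_congr G _ _ hα (Or.inl _) hxy
      left
      refine ⟨rfl, fun γ hγ => ?_⟩
      dsimp only
      rw [if_neg hγ]
      exact hoth γ.1 γ.2 (fun h => hγ (Subtype.ext h))
    · by_cases hδ : δ = τ
      · subst hδ
        have hβα : β = α := hterm β hAdj.symm
        subst hβα
        rw [dif_neg hα, dif_pos rfl]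
        rw [if_pos (hxy ▸ hpos)]
        apply inl_congr G _ _ hα (Or.inl _) hxy
        left
        refine ⟨rfl, fun γ hγ => ?_⟩
        dsimp only
        rw [if_neg hγ]
        exact hoth γ.1 (fun h => hγ (Subtype.ext h)) γ.2
      · rw [dif_neg hβ, dif_neg hδ]
        apply inl_congr G _ _ hα (Or.inl _)
          (hoth τ (fun h => hβ h.symm) (fun h => hδ h.symm))
        right
        refine ⟨hAdj, hxy, hpos, fun γ hγ1 hγ2 => ?_⟩
        exact hoth γ.1 (fun h => hγ1 (Subtype.ext h)) (fun h => hγ2 (Subtype.ext h))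

/-- unquotiented backward map on the left component -/
def bwdFunL (G : SimpleGraph V) (τ : V)
    (p : (Σ _ : {v : V // v ≠ τ}, {v : V // v ≠ τ} → ℝ) × ℝ) : Quot (baseRel G) :=
  Quot.mk _ ⟨p.1.1.1, fun γ => if hγ : γ = τ then p.2 else p.1.2 ⟨γ, hγ⟩⟩

lemma bwdFunL_sound (G : SimpleGraph V) (τ : V) (t : ℝ) :
    ∀ a b, baseRel (G.induce {v | v ≠ τ}) a b → bwdFunL G τ (a, t) = bwdFunL G τ (b, t) := by
  rintro ⟨β, z⟩ ⟨δ, w⟩ h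
  unfold bwdFunL
  apply Quot.sound
  rcases h with ⟨h1, h2⟩ | ⟨hAdj, hzw, hpos, hoth⟩
  · dsimp only at h1 h2
    subst h1
    left
    refine ⟨rfl, fun γ hγ => ?_⟩
    dsimp only
    by_cases hτ : γ = τ
    · rw [dif_pos hτ, dif_pos hτ]
    · rw [dif_neg hτ, dif_neg hτ]
      exact h2 ⟨γ, hτ⟩ (fun h => hγ (congrArg Subtype.val h))
  · dsimp only at hAdj hzw hpos hoth
    right
    refine ⟨hAdj, ?_, ?_, fun γ hγ1 hγ2 => ?_⟩
    · dsimp only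
      rw [dif_neg δ.2, dif_neg β.2]
      exact hzw
    · dsimp only
      rw [dif_neg δ.2]
      exact hpos
    · dsimp only at hγ1 hγ2 ⊢
      by_cases hτ : γ = τ
      · rw [dif_pos hτ, dif_pos hτ]
      · rw [dif_neg hτ, dif_neg hτ]
        exact hoth ⟨γ, hτ⟩ (fun h => hγ1 (congrArg Subtype.val h))
          (fun h => hγ2 (congrArg Subtype.val h))

/-- unquotiented backward map on the right component -/
def bwdFunR (G : SimpleGraph V) (τ α : V) (hα : α ≠ τ)
    (p : ({w : {v : V // v ≠ τ} // w ≠ ⟨α, hα⟩} → ℝ) × {t : ℝ // t ≤ 0}) :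
    Quot (baseRel G) :=
  Quot.mk _ ⟨τ, fun γ =>
    if hγ : γ = τ then 0 else if hγα : γ = α then p.2.1
      else p.1 ⟨⟨γ, hγ⟩, fun hc => hγα (congrArg Subtype.val hc)⟩⟩

/-- backward map on the sum -/
noncomputable def bwd (G : SimpleGraph V) (τ α : V) (hα : α ≠ τ) :
    SumT G τ α hα → Quot (baseRel G) :=
  Sum.elim
    (fun q => Quot.lift (fun s => bwdFunL G τ (s, q.2)) (bwdFunL_sound G τ q.2) q.1)
    (bwdFunR G τ α hα)

theorem bwd_sound (G : SimpleGraph V) (τ α : V) (hα : α ≠ τ) (hadj : G.Adj τ α) :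
    ∀ a b, pushRel G τ α hα a b → bwd G τ α hα a = bwd G τ α hα b := by
  rintro _ _ ⟨f, rfl, rfl⟩
  unfold bwd bwdFunR bwdFunL
  dsimp only [Sum.elim_inr, Sum.elim_inl]
  apply Quot.sound
  right
  refine ⟨hadj, ?_, ?_, fun γ hγ1 hγ2 => ?_⟩
  · dsimp only
    rw [dif_neg hα]
    simp
  · dsimp only
    rw [dif_neg hα]
    simp
  · dsimp only at hγ1 hγ2 ⊢
    rw [dif_neg hγ1, dif_neg hγ2, dif_neg hγ1]
    rw [dif_neg (show ¬(⟨γ, hγ1⟩ : {v : V // v ≠ τ}) = ⟨α, hα⟩ from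
      fun h => hγ2 (congrArg Subtype.val h))]

noncomputable def fwdQ (G : SimpleGraph V) (τ α : V) (hα : α ≠ τ) (hadj : G.Adj τ α)
    (hterm : ∀ β, G.Adj τ β → β = α) : Quot (baseRel G) → Quot (pushRel G τ α hα) :=
  Quot.lift (fwd G τ α hα) (fwd_sound G τ α hα hadj hterm)

noncomputable def bwdQ (G : SimpleGraph V) (τ α : V) (hα : α ≠ τ) (hadj : G.Adj τ α) :
    Quot (pushRel G τ α hα) → Quot (baseRel G) :=
  Quot.lift (bwd G τ α hα) (bwd_sound G τ α hα hadj)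

lemma fwdQ_mk (G : SimpleGraph V) (τ α : V) (hα : α ≠ τ) (hadj : G.Adj τ α)
    (hterm : ∀ β, G.Adj τ β → β = α) (p : Σ _ : V, V → ℝ) :
    fwdQ G τ α hα hadj hterm (Quot.mk _ p) = fwd G τ α hα p := rfl

lemma bwdQ_inl (G : SimpleGraph V) (τ α : V) (hα : α ≠ τ) (hadj : G.Adj τ α)
    (s : Σ _ : {v : V // v ≠ τ}, {v : V // v ≠ τ} → ℝ) (t : ℝ) :
    bwdQ G τ α hα hadj (Quot.mk _ (Sum.inl (Quot.mk _ s, t))) = bwdFunL G τ (s, t) := rfl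

lemma bwdQ_inr (G : SimpleGraph V) (τ α : V) (hα : α ≠ τ) (hadj : G.Adj τ α)
    (p : ({w : {v : V // v ≠ τ} // w ≠ ⟨α, hα⟩} → ℝ) × {t : ℝ // t ≤ 0}) :
    bwdQ G τ α hα hadj (Quot.mk _ (Sum.inr p)) = bwdFunR G τ α hα p := rfl

theorem left_inv (G : SimpleGraph V) (τ α : V) (hα : α ≠ τ) (hadj : G.Adj τ α)
    (hterm : ∀ β, G.Adj τ β → β = α) (p : Σ _ : V, V → ℝ) :
    bwdQ G τ α hα hadj (fwdQ G τ α hα hadj hterm (Quot.mk _ p)) = Quot.mk _ p := by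
  obtain ⟨β, x⟩ := p
  rw [fwdQ_mk]
  unfold fwd
  dsimp only
  by_cases hβ : β = τ
  · subst hβ
    rw [dif_pos rfl]
    by_cases h0 : 0 ≤ x α
    · rw [if_pos h0, bwdQ_inl]
      unfold bwdFunL
      dsimp only
      apply Quot.sound
      right
      refine ⟨hadj.symm, ?_, ?_, fun γ hγ1 hγ2 => ?_⟩
      · dsimp only
        rw [dif_pos rfl]
      · dsimp only
        rw [dif_pos rfl]
        exact h0
      · dsimp only at hγ1 hγ2 ⊢
        rw [dif_neg hγ2, if_neg (show ¬(⟨γ, hγ2⟩ : {v : V // v ≠ β}) = ⟨α, hα⟩ from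
          fun h => hγ1 (congrArg Subtype.val h))]
    · rw [if_neg h0, bwdQ_inr]
      unfold bwdFunR
      dsimp only
      apply Quot.sound
      left
      refine ⟨rfl, fun γ hγ => ?_⟩
      dsimp only at hγ ⊢
      rw [dif_neg hγ]
      by_cases hγα : γ = α
      · subst hγα
        rw [dif_pos rfl]
        exact min_eq_left (le_of_not_ge h0)
      · rw [dif_neg hγα]
  · rw [dif_neg hβ, bwdQ_inl]
    unfold bwdFunL
    dsimp only
    apply Quot.sound
    left
    refine ⟨rfl, fun γ hγ => ?_⟩
    dsimp only
    by_cases hγτ : γ = τ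
    · rw [dif_pos hγτ, hγτ]
    · rw [dif_neg hγτ]

theorem right_inv (G : SimpleGraph V) (τ α : V) (hα : α ≠ τ) (hadj : G.Adj τ α)
    (hterm : ∀ β, G.Adj τ β → β = α) (s : SumT G τ α hα) :
    fwdQ G τ α hα hadj hterm (bwdQ G τ α hα hadj (Quot.mk _ s)) = Quot.mk _ s := by
  rcases s with ⟨q, t⟩ | ⟨f, t⟩
  · induction q using Quot.ind with
    | _ p =>
      obtain ⟨β, z⟩ := p
      rw [bwdQ_inl]
      unfold bwdFunL
      dsimp only
      rw [fwdQ_mk]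
      unfold fwd
      dsimp only
      rw [dif_neg β.2]
      refine inl_congr G τ α hα (Or.inr ?_) ?_
      · have hz : (fun v : ↥{v : V | v ≠ τ} =>
            if hγ : (v : V) = τ then t else z ⟨v, hγ⟩) = z :=
          funext fun v => by rw [dif_neg v.2]
        rw [hz]
        rfl
      · rw [dif_pos rfl]
  · rw [bwdQ_inr]
    unfold bwdFunR
    dsimp only
    rw [fwdQ_mk]
    unfold fwd
    dsimp only
    rw [dif_pos rfl]
    have hxα : (if hγ : α = τ then (0:ℝ) else if hγα : α = α then t.1 else
        f ⟨⟨α, hγ⟩, fun hc => hγα (congrArg Subtype.val hc)⟩) = t.1 := by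
      rw [dif_neg hα, dif_pos rfl]
    by_cases h0 : 0 ≤ t.1
    · have ht0 : t.1 = 0 := le_antisymm t.2 h0
      rw [if_pos (by rw [hxα]; exact h0)]
      have key : Quot.mk (pushRel G τ α hα) (Sum.inr (f, ⟨0, le_refl 0⟩)) =
          Quot.mk (pushRel G τ α hα) (Sum.inl (Quot.mk _ ⟨(⟨α, hα⟩ : {v : V // v ≠ τ}),
            fun v => if h : v = (⟨α, hα⟩ : {v : V // v ≠ τ}) then 0
              else f ⟨v, h⟩⟩, (0 : ℝ))) := Quot.sound ⟨f, rfl, rfl⟩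
      have ht : t = (⟨0, le_refl 0⟩ : {t : ℝ // t ≤ 0}) := Subtype.ext ht0
      rw [ht]
      refine Eq.trans (inl_congr G τ α hα (Or.inr ?_) ?_) key.symm
      · refine congrArg (Sigma.mk _) (funext fun v => ?_)
        by_cases hv : v = (⟨α, hα⟩ : {v : V // v ≠ τ})
        · rw [if_pos hv, dif_pos hv]
        · rw [if_neg hv, dif_neg hv, dif_neg v.2,
            dif_neg (show ¬(v : V) = α from fun h => hv (Subtype.ext h))]
          rfl
      · rw [ht] at hxα
        exact hxα
    · rw [if_neg (by rw [hxα]; exact h0)]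
      refine inr_congr G τ α hα (funext fun w => ?_) ?_
      · rw [dif_neg w.1.2, dif_neg (show ¬(w.1 : V) = α from fun h => w.2 (Subtype.ext h))]
      · dsimp only
        rw [hxα]
        exact min_eq_left (le_of_not_ge h0)

theorem continuous_fwd (G : SimpleGraph V) (τ α : V) (hα : α ≠ τ) :
    Continuous (fwd G τ α hα) := by
  apply continuous_sigma
  intro β
  by_cases hβ : β = τ
  · subst hβ
    unfold fwd
    dsimp only
    simp only [dif_pos rfl]
    have hA : Continuous fun x : V → ℝ => Quot.mk (pushRel G β α hα)
        (Sum.inl (Quot.mk _ ⟨(⟨α, hα⟩ : {v : V // v ≠ β}),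
          fun v => if v = (⟨α, hα⟩ : {v : V // v ≠ β}) then 0 else x v.1⟩, x α)) := by
      apply continuous_quot_mk.comp
      apply continuous_inl.comp
      apply Continuous.prodMk
      · apply continuous_quot_mk.comp
        apply continuous_sigmaMk.comp
        apply continuous_pi
        intro v
        by_cases hv : v = (⟨α, hα⟩ : {v : V // v ≠ β})
        · simp only [if_pos hv]
          exact continuous_const
        · simp only [if_neg hv]
          exact continuous_apply _
      · exact continuous_apply α
    have hB : Continuous fun x : V → ℝ => Quot.mk (pushRel G β α hα)
        (Sum.inr (fun w : {w : {v : V // v ≠ β} // w ≠ ⟨α, hα⟩} => x w.1.1,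
          ⟨min (x α) 0, min_le_right _ _⟩)) := by
      apply continuous_quot_mk.comp
      apply continuous_inr.comp
      apply Continuous.prodMk
      · exact continuous_pi fun w => continuous_apply _
      · exact Continuous.subtype_mk ((continuous_apply α).min continuous_const) _
    refine Continuous.if_le hA hB continuous_const (continuous_apply α) ?_
    intro x h
    have s2 : Quot.mk (pushRel G β α hα)
        (Sum.inr (fun w : {w : {v : V // v ≠ β} // w ≠ ⟨α, hα⟩} => x w.1.1,
          ⟨0, le_refl 0⟩)) =
        Quot.mk (pushRel G β α hα) (Sum.inl (Quot.mk _ ⟨(⟨α, hα⟩ : {v : V // v ≠ β}),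
          fun v => if hv : v = (⟨α, hα⟩ : {v : V // v ≠ β}) then 0
            else x v.1⟩, (0 : ℝ))) := Quot.sound ⟨_, rfl, rfl⟩
    have s1 : Quot.mk (pushRel G β α hα)
        (Sum.inl (Quot.mk _ ⟨(⟨α, hα⟩ : {v : V // v ≠ β}),
          fun v => if v = (⟨α, hα⟩ : {v : V // v ≠ β}) then 0 else x v.1⟩, x α)) =
        Quot.mk (pushRel G β α hα) (Sum.inl (Quot.mk _ ⟨(⟨α, hα⟩ : {v : V // v ≠ β}),
          fun v => if hv : v = (⟨α, hα⟩ : {v : V // v ≠ β}) then 0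
            else x v.1⟩, (0 : ℝ))) := by
      refine inl_congr G _ _ hα (Or.inr ?_) h.symm
      refine congrArg (Sigma.mk _) (funext fun v => ?_)
      by_cases hv : v = (⟨α, hα⟩ : {v : V // v ≠ β})
      · rw [if_pos hv, dif_pos hv]
      · rw [if_neg hv, dif_neg hv]
    have s3 : Quot.mk (pushRel G β α hα)
        (Sum.inr (fun w : {w : {v : V // v ≠ β} // w ≠ ⟨α, hα⟩} => x w.1.1,
          ⟨min (x α) 0, min_le_right _ _⟩)) =
        Quot.mk (pushRel G β α hα)
        (Sum.inr (fun w : {w : {v : V // v ≠ β} // w ≠ ⟨α, hα⟩} => x w.1.1,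
          ⟨0, le_refl 0⟩)) := by
      refine inr_congr G _ _ hα rfl ?_
      dsimp only
      rw [← h, min_self]
    exact s1.trans (s2.symm.trans s3.symm)
  · unfold fwd
    dsimp only
    simp only [dif_neg hβ]
    apply continuous_quot_mk.comp
    apply continuous_inl.comp
    apply Continuous.prodMk
    · apply continuous_quot_mk.comp
      apply continuous_sigmaMk.comp
      exact continuous_pi fun v => continuous_apply _
    · exact continuous_apply τ

theorem continuous_fwdQ (G : SimpleGraph V) (τ α : V) (hα : α ≠ τ) (hadj : G.Adj τ α)
    (hterm : ∀ β, G.Adj τ β → β = α) : Continuous (fwdQ G τ α hα hadj hterm) :=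
  continuous_quot_lift _ (continuous_fwd G τ α hα)

theorem continuous_bwdFunL (G : SimpleGraph V) (τ : V) :
    Continuous (bwdFunL G τ) := by
  have key : Continuous (fun p : Σ _ : {v : V // v ≠ τ}, ({v : V // v ≠ τ} → ℝ) × ℝ =>
      Quot.mk (baseRel G) ⟨p.1.1, fun γ => if hγ : γ = τ then p.2.2
        else p.2.1 ⟨γ, hγ⟩⟩) := by
    apply continuous_sigma
    intro β
    dsimp only
    apply continuous_quot_mk.comp
    apply continuous_sigmaMk.comp
    apply continuous_pi
    intro γ
    by_cases hγ : γ = τ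
    · simp only [dif_pos hγ]
      exact continuous_snd
    · simp only [dif_neg hγ]
      exact (continuous_apply _).comp continuous_fst
  have heq : bwdFunL G τ = (fun p : Σ _ : {v : V // v ≠ τ}, ({v : V // v ≠ τ} → ℝ) × ℝ =>
      Quot.mk (baseRel G) ⟨p.1.1, fun γ => if hγ : γ = τ then p.2.2
        else p.2.1 ⟨γ, hγ⟩⟩) ∘ (Homeomorph.sigmaProdDistrib) := by
    funext p
    obtain ⟨⟨β, z⟩, t⟩ := p
    rfl
  rw [heq]
  exact key.comp (Homeomorph.sigmaProdDistrib).continuous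

theorem continuous_bwd (G : SimpleGraph V) (τ α : V) (hα : α ≠ τ) :
    Continuous (bwd G τ α hα) := by
  apply Continuous.sumElim
  · apply Topology.IsQuotientMap.continuous_lift_prod_left isQuotientMap_quot_mk
    exact continuous_bwdFunL G τ
  · unfold bwdFunR
    apply continuous_quot_mk.comp
    apply continuous_sigmaMk.comp
    apply continuous_pi
    intro γ
    by_cases hγ : γ = τ
    · simp only [dif_pos hγ]
      exact continuous_const
    · simp only [dif_neg hγ]
      by_cases hγα : γ = α
      · simp only [dif_pos hγα]
        exact continuous_subtype_val.comp continuous_snd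
      · simp only [dif_neg hγα]
        exact (continuous_apply _).comp continuous_fst

theorem continuous_bwdQ (G : SimpleGraph V) (τ α : V) (hα : α ≠ τ) (hadj : G.Adj τ α) :
    Continuous (bwdQ G τ α hα hadj) :=
  continuous_quot_lift _ (continuous_bwd G τ α hα)

noncomputable def theHomeo (G : SimpleGraph V) (τ α : V) (hα : α ≠ τ) (hadj : G.Adj τ α)
    (hterm : ∀ β, G.Adj τ β → β = α) :
    Quot (baseRel G) ≃ₜ Quot (pushRel G τ α hα) where
  toFun := fwdQ G τ α hα hadj hterm
  invFun := bwdQ G τ α hα hadj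
  left_inv := Quot.ind (left_inv G τ α hα hadj hterm)
  right_inv := Quot.ind (right_inv G τ α hα hadj hterm)
  continuous_toFun := continuous_fwdQ G τ α hα hadj hterm
  continuous_invFun := continuous_bwdQ G τ α hα hadj

end Stmt7Aux

/-- Let `τ` be a terminal vertex of a tree `T` with unique adjacent vertex `α`,
and `T_τ` the tree obtained by deleting `τ` and the edge `{τ, α}`.  Then the
arboreal singularity `L_T` is homeomorphic to the pushout gluing
`L_{T_τ}(α) × ℝ_{≤0}` to `L_{T_τ} × ℝ` along `L_{T_τ}(α) × {0}`. -/
theorem stmt7 {V : Type*} [Fintype V] [DecidableEq V] (G : SimpleGraph V)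
    (hG : G.IsTree) (τ α : V) (hadj : G.Adj τ α)
    (hterm : ∀ β, G.Adj τ β → β = α) :
    Nonempty <|
      Quot (baseRel G) ≃ₜ
        Quot (fun a b :
            (Quot (baseRel (G.induce {v | v ≠ τ})) × ℝ) ⊕
              (({w : {v : V // v ≠ τ} // w ≠ ⟨α, hadj.ne'⟩} → ℝ) × {t : ℝ // t ≤ 0}) =>
          ∃ f : {w : {v : V // v ≠ τ} // w ≠ ⟨α, hadj.ne'⟩} → ℝ,
            a = Sum.inr (f, ⟨0, le_refl 0⟩) ∧
              b = Sum.inl (Quot.mk _ ⟨(⟨α, hadj.ne'⟩ : {v : V // v ≠ τ}),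
                fun v => if h : v = (⟨α, hadj.ne'⟩ : {v : V // v ≠ τ}) then 0
                  else f ⟨v, h⟩⟩, (0 : ℝ))) := by
  exact ⟨Stmt7Aux.theHomeo G τ α hadj.ne' hadj hterm⟩
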